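/- (Theorem 2.4.) Let n ≥ 1, p ≥ 0, and k ≥ max(3n−2−p, n) be integers, set L = k + p − n + 1, assume L is odd, and set r = (L+1)/2. For y ∈ ℝ^k define the r × n matrix M(y) by M(y)_{i,j} = (y_{i+j−1} if 1 ≤ i+j−1 ≤ k, else 0) + (y_{L−i+j} if 1 ≤ L−i+j ≤ k, else 0). Then the set {y ∈ ℝ^k : rank M(y) < n} has Lebesgue measure zero; equivalently, if the entries y_1,…,y_k are i.i.d. nondegenerate Gaussian random variables, then with probability 1 the matrix M(y) has full column rank n, so the reduced linear system M(y) x = v has at most one solution x ∈ ℝⁿ. -/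

import Mathlib

open MeasureTheory


theorem mv_zero_set_null : ∀ (k : ℕ) (q : MvPolynomial (Fin k) ℝ), q ≠ 0 →
    volume {x : Fin k → ℝ | MvPolynomial.eval x q = 0} = 0 := by
  intro k
  induction k with
  | zero =>
    intro q hq
    obtain ⟨c, rfl⟩ := MvPolynomial.C_surjective (Fin 0) q
    have hc : c ≠ 0 := fun h => hq (by simp [h])
    convert measure_empty (μ := volume)
    ext x
    simp [hc]
  | succ k ih =>
    intro q hq
    set P : Polynomial (MvPolynomial (Fin k) ℝ) := MvPolynomial.finSuccEquiv ℝ k q with hPdef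
    have hPne : P ≠ 0 := fun h => hq (by
      have := (MvPolynomial.finSuccEquiv ℝ k).injective (h.trans (map_zero _).symm)
      simpa using this)
    -- the bad set of first coordinates
    have hBfin : {a : ℝ | Polynomial.eval (MvPolynomial.C a) P = 0}.Finite := by
      have h1 : {z : MvPolynomial (Fin k) ℝ | Polynomial.IsRoot P z}.Finite :=
        Polynomial.finite_setOf_isRoot hPne
      exact h1.preimage ((MvPolynomial.C_injective (Fin k) ℝ).injOn)
    -- measurable equiv
    set e := MeasurableEquiv.piFinSuccAbove (fun _ : Fin (k+1) => ℝ) 0 with hedef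
    have hmp := volume_preserving_piFinSuccAbove (fun _ : Fin (k+1) => ℝ) 0
    set T : Set (ℝ × (Fin k → ℝ)) :=
      {z | MvPolynomial.eval (Fin.cons z.1 z.2) q = 0} with hTdef
    have hTmeas : MeasurableSet T := by
      have hcont : Continuous fun z : ℝ × (Fin k → ℝ) =>
          MvPolynomial.eval (Fin.cons z.1 z.2) q := by
        refine (MvPolynomial.continuous_eval q).comp ?_
        apply continuous_pi
        intro j
        refine Fin.cases ?_ ?_ j
        · exact continuous_fst
        · intro i
          exact (continuous_apply i).comp continuous_snd
      exact hcont.measurable (measurableSet_singleton 0)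
    have hpre : e ⁻¹' T = {x : Fin (k+1) → ℝ | MvPolynomial.eval x q = 0} := by
      ext x
      have hx : (Fin.cons (e x).1 (e x).2 : Fin (k+1) → ℝ) = x := by
        funext j
        refine Fin.cases ?_ ?_ j
        · rfl
        · intro i
          simp [hedef, MeasurableEquiv.piFinSuccAbove, Fin.succAbove, Fin.tail]
      simp only [Set.mem_preimage, hTdef, Set.mem_setOf_eq, hx]
    have hvol : volume {x : Fin (k+1) → ℝ | MvPolynomial.eval x q = 0}
        = (volume.prod volume) T := by
      rw [← hpre]
      exact hmp.measure_preimage hTmeas.nullMeasurableSet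
    rw [hvol, Measure.measure_prod_null hTmeas]
    have hae : ∀ᵐ a : ℝ, Polynomial.eval (MvPolynomial.C a) P ≠ 0 := by
      refine (ae_iff.mpr ?_)
      simpa using hBfin.measure_zero volume
    filter_upwards [hae] with a ha
    have hsec : (Prod.mk a ⁻¹' T) =
        {x : Fin k → ℝ | MvPolynomial.eval x (Polynomial.eval (MvPolynomial.C a) P) = 0} := by
      ext x
      simp only [Set.mem_preimage, hTdef, Set.mem_setOf_eq]
      rw [MvPolynomial.eval_eq_eval_mv_eval']
      rw [Polynomial.eval_map]
      rw [show (a : ℝ) = MvPolynomial.eval x (MvPolynomial.C a) by simp]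
      rw [Polynomial.eval₂_at_apply]
      rw [← hPdef]
      simp
    rw [hsec]
    exact ih _ ha

theorem rank_submatrix_le'' {r n : ℕ} (f : Fin n → Fin r) (A : Matrix (Fin r) (Fin n) ℝ) :
    (A.submatrix f id).rank ≤ A.rank := by
  have h : A.submatrix f id = A.submatrix f (Equiv.refl (Fin n)) := rfl
  rw [h, Matrix.rank, Matrix.rank, Matrix.mulVecLin_submatrix]
  have h2 : (LinearMap.funLeft ℝ ℝ ⇑(Equiv.refl (Fin n)).symm) = LinearMap.id := by
    ext g i; rfl
  rw [h2, LinearMap.comp_id, LinearMap.range_comp]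
  exact Submodule.finrank_map_le _ _



/-- The folded coefficient matrix `M(y) = H₁ + Î H₂ ∈ ℝ^{r×n}` of the linear
autocorrelation equations: in 1-based indexing,
`M(y)_{i,j} = (y_{i+j-1} if 1 ≤ i+j-1 ≤ k else 0) + (y_{L-i+j} if 1 ≤ L-i+j ≤ k else 0)`.
Here indices are 0-based, so `y` is indexed `0, …, k-1`, rows by `i < r`, columns by `j < n`. -/
noncomputable def Mmat (k n L r : ℕ) (y : ℕ → ℝ) : Matrix (Fin r) (Fin n) ℝ :=
  Matrix.of fun i j =>
    (if i.1 + j.1 + 1 ≤ k then y (i.1 + j.1) else 0) +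
    (if i.1 < L + j.1 ∧ L + j.1 ≤ k + i.1 then y (L + j.1 - i.1 - 1) else 0)

/-- Theorem 2.4: for `n ≥ 1`, `p ≥ 0`, `k ≥ max(3n-2-p, n)`, `L = k+p-n+1` odd and
`r = (L+1)/2`, the set of backgrounds `y ∈ ℝᵏ` for which `M(y)` fails to have full
column rank `n` has Lebesgue measure zero (so, for a.e. `y`, the reduced linear system
`M(y) x = v` has at most one solution). -/
theorem stmt8 (n p k : ℕ) (hn : 1 ≤ n) (hk1 : 3 * n - 2 - p ≤ k) (hk2 : n ≤ k)
    (hodd : Odd (k + p - n + 1)) :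
    volume {y : Fin k → ℝ |
      (Mmat k n (k + p - n + 1) ((k + p - n + 1 + 1) / 2)
        (fun l => if h : l < k then y ⟨l, h⟩ else 0)).rank < n} = 0 := by
  set L := k + p - n + 1 with hL
  set r := (L + 1) / 2 with hr
  have hLn : 2 * n - 1 ≤ L := by omega
  have hrn : n ≤ r := by omega
  clear_value L r
  have hrow : ∀ j' : Fin n, n - 1 - j'.1 < r := fun j' => by omega
  set f : Fin n → Fin r := fun j' => ⟨n - 1 - j'.1, hrow j'⟩ with hf
  set Xv : ℕ → MvPolynomial (Fin k) ℝ :=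
    fun l => if h : l < k then MvPolynomial.X ⟨l, h⟩ else 0 with hXv
  set N : Matrix (Fin n) (Fin n) (MvPolynomial (Fin k) ℝ) := Matrix.of fun j' j =>
    (if (n - 1 - j'.1) + j.1 + 1 ≤ k then Xv ((n - 1 - j'.1) + j.1) else 0) +
    (if (n - 1 - j'.1) < L + j.1 ∧ L + j.1 ≤ k + (n - 1 - j'.1) then
      Xv (L + j.1 - (n - 1 - j'.1) - 1) else 0) with hN
  have hmap : ∀ y : Fin k → ℝ,
      N.map (MvPolynomial.eval y) =
        (Mmat k n L r (fun l => if h : l < k then y ⟨l, h⟩ else 0)).submatrix f id := by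
    intro y
    ext j' j
    simp only [Matrix.map_apply, hN, Matrix.of_apply, Matrix.submatrix_apply, Mmat, id_eq, hf,
      map_add, apply_ite (MvPolynomial.eval y), hXv, apply_dite (MvPolynomial.eval y),
      MvPolynomial.eval_X, map_zero]
  have hq_eval : ∀ y : Fin k → ℝ,
      MvPolynomial.eval y N.det =
        ((Mmat k n L r (fun l => if h : l < k then y ⟨l, h⟩ else 0)).submatrix f id).det := by
    intro y
    rw [RingHom.map_det, RingHom.mapMatrix_apply, hmap]
  -- the witness
  set y₀ : Fin k → ℝ := fun i => if i.1 = n - 1 then 1 else 0 with hy₀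
  set d : Fin n → ℝ := fun j => if j.1 = 0 ∧ L = 2 * n - 1 then 2 else 1 with hd
  have hdiag : (Mmat k n L r (fun l => if h : l < k then y₀ ⟨l, h⟩ else 0)).submatrix f id
      = Matrix.diagonal d := by
    ext j' j
    rcases j' with ⟨a, ha⟩
    rcases j with ⟨b, hb⟩
    simp only [Matrix.submatrix_apply, Mmat, Matrix.of_apply, hf, id_eq, hy₀,
      Matrix.diagonal, Fin.mk.injEq, hd]
    split_ifs
    all_goals try norm_num
    all_goals omega
  have hqne : N.det ≠ 0 := by
    intro h0
    have h1 : MvPolynomial.eval y₀ N.det = Matrix.det (Matrix.diagonal d) := by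
      rw [hq_eval y₀, hdiag]
    rw [h0, map_zero, Matrix.det_diagonal] at h1
    have h2 : ∏ j : Fin n, d j ≠ 0 := by
      refine Finset.prod_ne_zero_iff.mpr fun j _ => ?_
      simp only [hd]
      split_ifs <;> norm_num
    exact h2 h1.symm
  have hsub : {y : Fin k → ℝ |
      (Mmat k n L r (fun l => if h : l < k then y ⟨l, h⟩ else 0)).rank < n} ⊆
      {y : Fin k → ℝ | MvPolynomial.eval y N.det = 0} := by
    intro y hy
    simp only [Set.mem_setOf_eq] at hy ⊢
    rw [hq_eval y]
    by_contra hdet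
    set S := (Mmat k n L r (fun l => if h : l < k then y ⟨l, h⟩ else 0)).submatrix f id with hS
    have hunit : IsUnit S := (Matrix.isUnit_iff_isUnit_det S).mpr (isUnit_iff_ne_zero.mpr hdet)
    have h3 : S.rank = n := by
      rw [Matrix.rank_of_isUnit S hunit, Fintype.card_fin]
    have h4 := rank_submatrix_le'' f (Mmat k n L r (fun l => if h : l < k then y ⟨l, h⟩ else 0))
    rw [← hS] at h4
    omega
  exact le_antisymm ((measure_mono hsub).trans (mv_zero_set_null k N.det hqne).le) (by simp)
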